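/- arXiv:2204.12871 — 3 statements merged into one kernel-verified Lean document; each statement's English description precedes it below -/
import Mathlib

section
/- For every k ≥ n and all increasing sequences of integers (s_{1,m})_{m=0}^k,…,(s_{n,m})_{m=0}^k there exists a bounded set E ⊂ ℝⁿ of positive Lebesgue measure with the following property: if B is a rare basis in ℝⁿ and Ω is the set of all n-tuples (m₁,…,mₙ) ∈ Ω_{n,k} for which there exists an interval R₁×⋯×Rₙ ∈ B with dyadic side lengths such that |R_j| ∈ (2^{s_{j,m_j−1}}, 2^{s_{j,m_j}}] for every j = 1,…,n, then |{x ∈ ℝⁿ : M_B(χ_E)(x) ≥ 1/2^k}| ≥ cₙ · card(Ω) · 2^k · |E|, where cₙ > 0 depends only on n. -/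
open MeasureTheory Set
open scoped ENNReal

noncomputable section

/-- An axis-parallel interval (box) in `ℝⁿ`, given by its left and right endpoints. -/
structure BoxInterval (n : ℕ) where
  a : Fin n → ℝ
  b : Fin n → ℝ
  hab : ∀ j, a j < b j

namespace BoxInterval

/-- The underlying set of a box. -/
def toSet {n : ℕ} (R : BoxInterval n) : Set (Fin n → ℝ) :=
  Set.univ.pi fun j => Set.Icc (R.a j) (R.b j)

/-- The side length of a box in direction `j`. -/
def side {n : ℕ} (R : BoxInterval n) (j : Fin n) : ℝ := R.b j - R.a j

/-- Translation of a box by a vector `v`. -/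
def translate {n : ℕ} (R : BoxInterval n) (v : Fin n → ℝ) : BoxInterval n where
  a := fun j => R.a j + v j
  b := fun j => R.b j + v j
  hab := fun j => by have := R.hab j; linarith

end BoxInterval

/-- A rare basis in `ℝⁿ`: a nonempty translation-invariant collection of intervals. -/
def IsRareBasis {n : ℕ} (B : Set (BoxInterval n)) : Prop :=
  B.Nonempty ∧ ∀ R ∈ B, ∀ v : Fin n → ℝ, R.translate v ∈ B

/-- The geometric maximal operator `M_B` associated with a collection `B` of boxes:
`M_B f (x) = sup { (1/|R|) ∫_R |f| : x ∈ R ∈ B }`. -/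
def maxOp {n : ℕ} (B : Set (BoxInterval n)) (f : (Fin n → ℝ) → ℝ)
    (x : Fin n → ℝ) : ℝ≥0∞ :=
  ⨆ (R : BoxInterval n) (_ : R ∈ B) (_ : x ∈ R.toSet),
    (∫⁻ y in R.toSet, ENNReal.ofReal |f y| ∂volume) / volume R.toSet

/-- The spectrum `W_B ⊂ ℤⁿ` of a collection of boxes: all tuples
`(⌈log₂ |R₁|⌉, …, ⌈log₂ |Rₙ|⌉)` over boxes `R₁ × ⋯ × Rₙ ∈ B`. -/
def spectrumB {n : ℕ} (B : Set (BoxInterval n)) : Set (Fin n → ℤ) :=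
  {w | ∃ R ∈ B, ∀ j, w j = ⌈Real.logb 2 (R.side j)⌉}

/-- The slice `W_t` of `W ⊂ ℤ^{k+1}` over `t ∈ ℤᵏ`. -/
def sliceZ {k : ℕ} (W : Set (Fin (k + 1) → ℤ)) (t : Fin k → ℤ) : Set ℤ :=
  {τ | Fin.snoc t τ ∈ W}

/-- `W` is a net for `S` in `ℤ^{k+1}`: every slice of `W` is a one-dimensional
net for the corresponding slice of `S`. -/
def IsNetMulti {k : ℕ} (W S : Set (Fin (k + 1) → ℤ)) : Prop :=
  ∀ t : Fin k → ℤ, ∃ N : ℕ, ∀ τ ∈ sliceZ S t, ∃ w ∈ sliceZ W t, |τ - w| ≤ (N : ℤ)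

/-- Projection of `W ⊂ ℤⁿ` onto the first `k` coordinates. -/
def projZ {n : ℕ} (k : ℕ) (hk : k ≤ n) (W : Set (Fin n → ℤ)) : Set (Fin k → ℤ) :=
  (fun w (i : Fin k) => w (Fin.castLE hk i)) '' W

/-- `W ⊂ ℤⁿ` is dense in `S₁ × ⋯ × Sₙ`: for each `k`, `π_{k+1}(W)` is a net for
`π_k(W) × S_{k+1}`. -/
def IsDenseIn {n : ℕ} (W : Set (Fin n → ℤ)) (S : Fin n → Set ℤ) : Prop :=
  ∀ k : Fin n,
    IsNetMulti (projZ (k.val + 1) k.isLt W)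
      {v : Fin (k.val + 1) → ℤ |
        Fin.init v ∈ projZ k.val (Nat.le_of_lt k.isLt) W ∧ v (Fin.last k.val) ∈ S k}

/-- `Ω_{n,k}`: the set of `n`-tuples of positive integers summing to `k`. -/
def OmegaNK (n k : ℕ) : Set (Fin n → ℕ) :=
  {m | (∀ j, 1 ≤ m j) ∧ ∑ j, m j = k}

/-- The smallest box concentric with `R`, containing `R`, with dyadic side lengths. -/
def dyadicHull {n : ℕ} (R : BoxInterval n) : BoxInterval n where
  a := fun j => (R.a j + R.b j) / 2 - (2:ℝ) ^ ⌈Real.logb 2 (R.side j)⌉ / 2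
  b := fun j => (R.a j + R.b j) / 2 + (2:ℝ) ^ ⌈Real.logb 2 (R.side j)⌉ / 2
  hab := fun j => by
    have h : (0:ℝ) < (2:ℝ) ^ ⌈Real.logb 2 (R.side j)⌉ := by positivity
    linarith

/-- The dyadic skeleton `B_d` of a collection `B`. -/
def dyadicSkeleton {n : ℕ} (B : Set (BoxInterval n)) : Set (BoxInterval n) :=
  {Rd | ∃ R ∈ B, Rd = dyadicHull R}

/-- `B` is `Ω`-complete (for `Ω ⊆ Ω_{n,k}`). -/
def OmegaComplete {n : ℕ} (B : Set (BoxInterval n)) (k : ℕ) (Ω : Set (Fin n → ℕ)) : Prop :=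
  ∃ s : Fin n → ℕ → ℤ,
    (∀ j, ∀ m, m < k → s j m < s j (m + 1)) ∧
    ∀ m ∈ Ω, ∃ R ∈ dyadicSkeleton B, ∀ j,
      R.side j ∈ Set.Ioc ((2:ℝ) ^ s j (m j - 1)) ((2:ℝ) ^ s j (m j))

/-- Product of an `n`-dimensional box and a one-dimensional box. -/
def prodBox {n : ℕ} (J1 : BoxInterval n) (J2 : BoxInterval 1) : BoxInterval (n + 1) where
  a := Fin.snoc J1.a (J2.a 0)
  b := Fin.snoc J1.b (J2.b 0)
  hab := fun j => by
    induction j using Fin.lastCases with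
    | last => simpa using J2.hab 0
    | cast i => simpa using J1.hab i

/-- The product basis `B₁ × B₂`. -/
def prodBasis {n : ℕ} (B1 : Set (BoxInterval n)) (B2 : Set (BoxInterval 1)) :
    Set (BoxInterval (n + 1)) :=
  {R | ∃ J1 ∈ B1, ∃ J2 ∈ B2, R = prodBox J1 J2}

/-- The (is)-property of a rare basis in `ℝ²`. -/
def ISProperty (B : Set (BoxInterval 2)) : Prop :=
  ∀ k : ℕ, ∃ R : Fin (k + 1) → BoxInterval 2,
    (∀ i, R i ∈ B) ∧
    (∀ i, (R i).a = fun _ => 0) ∧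
    (∀ i, ∃ pq : Fin 2 → ℤ, ∀ l, (R i).b l = (2:ℝ) ^ pq l) ∧
    (∀ i j, i ≠ j → ∀ v : Fin 2 → ℝ, ¬ ((R i).translate v).toSet ⊆ (R j).toSet) ∧
    (∀ i j, ∃ Q ∈ B, Q.toSet = (R i).toSet ∩ (R j).toSet)


section AuxRare
open scoped Pointwise

/-- The binary digit of `x` at position `p` (value in `{0,1}` for `x ≥ 0`). -/
def bitAt (p : ℤ) (x : ℝ) : ℤ := ⌊x / 2^p⌋ % 2

lemma two_zpow_pos (t : ℤ) : (0:ℝ) < 2^t := zpow_pos two_pos t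

lemma two_zpow_cast (m : ℤ) (hm : 0 ≤ m) : (2:ℝ)^m = ((2^m.toNat : ℤ) : ℝ) := by
  push_cast
  rw [← zpow_natCast, Int.toNat_of_nonneg hm]

lemma bitAt_add_int_mul {p q : ℤ} (h : p < q) (x : ℝ) (u : ℤ) :
    bitAt p (x + u * 2^q) = bitAt p x := by
  unfold bitAt
  have h2p : (0:ℝ) < 2^p := two_zpow_pos p
  have hqp : (2:ℝ)^q = 2^p * ((2^(q-p).toNat : ℤ) : ℝ) := by
    rw [← two_zpow_cast (q-p) (by omega), ← zpow_add₀ (two_ne_zero), add_sub_cancel]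
  have : (x + ↑u * 2^q) / 2^p = x / 2^p + ↑(u * 2^(q-p).toNat) := by
    rw [hqp]; push_cast; field_simp
  rw [this, Int.floor_add_intCast]
  obtain ⟨c, hc⟩ : (2:ℤ) ∣ 2^(q-p).toNat := dvd_pow_self 2 (by omega)
  rw [hc]
  have : ⌊x / 2^p⌋ + u * (2 * c) = ⌊x / 2^p⌋ + 2 * (u * c) := by ring
  rw [this, Int.add_mul_emod_self_left]

lemma bitAt_pattern {p : ℤ} (u e : ℤ) (he : e = 0 ∨ e = 1) {z : ℝ} (hz0 : 0 ≤ z)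
    (hz : z < 2^p) : bitAt p (↑u * 2^(p+1) + ↑e * 2^p + z) = e := by
  unfold bitAt
  have h2p : (0:ℝ) < 2^p := two_zpow_pos p
  have h1 : (2:ℝ)^(p+1) = 2 * 2^p := by
    rw [zpow_add_one₀ (two_ne_zero)]; ring
  have : (↑u * 2^(p+1) + ↑e * 2^p + z) / 2^p = z / 2^p + ↑(2*u + e) := by
    rw [h1]; push_cast; field_simp; ring
  rw [this, Int.floor_add_intCast]
  have hz1 : ⌊z / 2^p⌋ = 0 := by
    rw [Int.floor_eq_zero_iff]
    constructor
    · positivity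
    · rw [div_lt_one h2p] at *; simpa using hz
  rw [hz1]
  omega

lemma floor_intAdd_div (a N : ℤ) (hN : 0 < N) (f : ℝ) (h0 : 0 ≤ f) (h1 : f < 1) :
    ⌊((a:ℝ) + f) / (N:ℝ)⌋ = a / N := by
  have hNR : (0:ℝ) < (N:ℝ) := by exact_mod_cast hN
  have key : a = N * (a / N) + a % N := (Int.mul_ediv_add_emod a N).symm
  have h2 : 0 ≤ a % N := Int.emod_nonneg a (by omega)
  have h3 : a % N < N := Int.emod_lt_of_pos a hN
  rw [Int.floor_eq_iff]
  constructor
  · rw [le_div_iff₀ hNR]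
    have : ((a / N : ℤ):ℝ) * N ≤ (a:ℝ) := by
      have : (N * (a / N) : ℤ) ≤ a := by omega
      have := (@Int.cast_le ℝ _ _ _).2 this
      push_cast at this ⊢; linarith
    linarith
  · rw [div_lt_iff₀ hNR]
    have : ((a:ℝ) + 1) ≤ ((a / N : ℤ):ℝ) * N + N := by
      have : a + 1 ≤ N * (a / N) + N := by omega
      have := (@Int.cast_le ℝ _ _ _).2 this
      push_cast at this ⊢; linarith
    push_cast
    linarith

/-- Points in the same aligned `2^t`-interval have the same bits at positions `≥ t`. -/
lemma bitAt_high_eq {q t : ℤ} (hq : t ≤ q) (a : ℤ) {x y : ℝ}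
    (hx : (a:ℝ) * 2^t ≤ x) (hx' : x < ((a:ℝ)+1) * 2^t)
    (hy : (a:ℝ) * 2^t ≤ y) (hy' : y < ((a:ℝ)+1) * 2^t) :
    bitAt q x = bitAt q y := by
  have h2t : (0:ℝ) < 2^t := two_zpow_pos t
  set N : ℤ := 2^(q-t).toNat with hN
  have hN0 : 0 < N := by positivity
  have key : ∀ z : ℝ, (a:ℝ) * 2^t ≤ z → z < ((a:ℝ)+1) * 2^t → ⌊z / 2^q⌋ = a / N := by
    intro z h1 h2
    have hq2 : (2:ℝ)^q = 2^t * (N:ℝ) := by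
      rw [hN, ← two_zpow_cast (q-t) (by omega), ← zpow_add₀ (two_ne_zero), add_sub_cancel]
    have hdiv : z / 2^q = ((a:ℝ) + (z / 2^t - a)) / (N:ℝ) := by
      rw [hq2]; field_simp; ring
    rw [hdiv]
    apply floor_intAdd_div a N hN0
    · have : (a:ℝ) ≤ z / 2^t := (le_div_iff₀ h2t).2 (by linarith)
      linarith
    · have : z / 2^t < (a:ℝ) + 1 := by rw [div_lt_iff₀ h2t]; linarith
      linarith
  unfold bitAt
  rw [key x hx hx', key y hy hy']

/-- The set of `x ∈ [0, 2^T)` whose bits at positions `p 0, …, p (j-1)` equal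
`ε 0, …, ε (j-1)`. -/
def bset (j : ℕ) (p ε : ℕ → ℤ) (T : ℤ) : Set ℝ :=
  {x | 0 ≤ x ∧ x < 2^T ∧ ∀ i < j, bitAt (p i) x = ε i}

lemma measurableSet_bset (j : ℕ) (p ε : ℕ → ℤ) (T : ℤ) : MeasurableSet (bset j p ε T) := by
  have h3 : ∀ i : ℕ, MeasurableSet {x : ℝ | bitAt (p i) x = ε i} := by
    intro i
    have hm : Measurable fun x : ℝ => ⌊x / 2^(p i)⌋ :=
      Int.measurable_floor.comp (measurable_id.div_const _)
    exact hm (MeasurableSpace.measurableSet_top (s := {z : ℤ | z % 2 = ε i}))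
  have : bset j p ε T = {x : ℝ | 0 ≤ x} ∩ ({x : ℝ | x < 2^T} ∩ ⋂ i ∈ Finset.range j,
      {x : ℝ | bitAt (p i) x = ε i}) := by
    ext x
    simp only [bset, mem_setOf_eq, mem_inter_iff, mem_iInter, Finset.mem_range]
  rw [this]
  exact measurableSet_Ici.inter (measurableSet_Iio.inter
    (MeasurableSet.biInter (Finset.range j).countable_toSet fun i _ => h3 i))

lemma bset_succ (j : ℕ) (p ε : ℕ → ℤ) (T : ℤ) (hpj : p j < T)
    (hmono : ∀ i < j, p i < p j) (hε : ε j = 0 ∨ ε j = 1) :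
    bset (j+1) p ε T = ⋃ u ∈ Finset.range (2^(T - p j - 1).toNat),
      (((u:ℝ) * 2^(p j + 1) + (ε j : ℝ) * 2^(p j)) +ᵥ bset j p ε (p j)) := by
  have h2pj : (0:ℝ) < 2^(p j) := two_zpow_pos _
  have h2pj1 : (2:ℝ)^(p j + 1) = 2 * 2^(p j) := by
    rw [zpow_add_one₀ (two_ne_zero)]; ring
  have hTsplit : (2:ℝ)^T = ((2^(T - p j - 1).toNat : ℤ) : ℝ) * 2^(p j + 1) := by
    rw [← two_zpow_cast (T - p j - 1) (by omega), ← zpow_add₀ (two_ne_zero)]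
    ring_nf
  ext x
  simp only [Set.mem_iUnion, Finset.mem_range, Set.mem_vadd_set, vadd_eq_add]
  constructor
  · rintro ⟨hx0, hxT, hbits⟩
    set a : ℤ := ⌊x / 2^(p j + 1)⌋ with ha
    have h2pj1' : (0:ℝ) < 2^(p j + 1) := two_zpow_pos _
    have ha0 : 0 ≤ a := Int.floor_nonneg.2 (by positivity)
    have haN : a < 2^(T - p j - 1).toNat := by
      have : x / 2^(p j + 1) < ((2^(T - p j - 1).toNat : ℤ) : ℝ) := by
        rw [div_lt_iff₀ h2pj1']
        rw [hTsplit] at hxT; linarith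
      exact_mod_cast (Int.floor_lt.2 this)
    set w : ℝ := x - (a:ℝ) * 2^(p j + 1) with hw
    have hw0 : 0 ≤ w := by
      have h2 : (a:ℝ) * 2^(p j + 1) ≤ x :=
        (le_div_iff₀ h2pj1').1 (Int.floor_le (x / 2^(p j + 1)))
      simp only [hw]; linarith
    have hw1 : w < 2^(p j + 1) := by
      have := Int.lt_floor_add_one (x / 2^(p j + 1))
      rw [← ha] at this
      have : x < ((a:ℝ) + 1) * 2^(p j + 1) := by
        rw [← div_lt_iff₀ h2pj1']; push_cast; linarith
      simp only [hw]; linarith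
    have hbitj : bitAt (p j) w = ε j := by
      have : x = w + (a:ℝ) * 2^(p j + 1) := by simp [hw]
      have hb := hbits j (Nat.lt_succ_self j)
      rw [this] at hb
      rw [← bitAt_add_int_mul (by omega : p j < p j + 1) w a]
      exact_mod_cast hb
    have hfl : ⌊w / 2^(p j)⌋ = ε j := by
      have h01 : 0 ≤ ⌊w / 2^(p j)⌋ := Int.floor_nonneg.2 (by positivity)
      have h02 : ⌊w / 2^(p j)⌋ < 2 := by
        apply Int.floor_lt.2
        rw [div_lt_iff₀ h2pj]
        push_cast; rw [h2pj1] at hw1; linarith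
      unfold bitAt at hbitj
      omega
    set z : ℝ := w - (ε j : ℝ) * 2^(p j) with hz
    have hz0 : 0 ≤ z := by
      rcases hε with h | h
      · simp [hz, h]; linarith
      · have : (2:ℝ)^(p j) ≤ w := by
          have := Int.le_floor.1 (le_of_eq hfl.symm)
          have h1 : (1:ℝ) ≤ w / 2^(p j) := by
            rw [h] at hfl
            have := Int.floor_le (w / 2^(p j))
            rw [hfl] at this; exact_mod_cast this.trans_eq' (by norm_num)
          rw [le_div_iff₀ h2pj] at h1; linarith
        simp [hz, h]; linarith
    have hz1 : z < 2^(p j) := by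
      have : w / 2^(p j) < ((ε j : ℝ) + 1) := by
        have := Int.lt_floor_add_one (w / 2^(p j))
        rw [hfl] at this; exact_mod_cast this
      rw [div_lt_iff₀ h2pj] at this
      simp only [hz]; nlinarith [h2pj]
    have haN' : a.toNat < 2^(T - p j - 1).toNat := by
      zify [Int.toNat_of_nonneg ha0]; exact_mod_cast haN
    refine ⟨a.toNat, haN', z, ⟨hz0, hz1, ?_⟩, ?_⟩
    · intro i hi
      have hxz : x = z + (ε j : ℝ) * 2^(p j) + (a:ℝ) * 2^(p j + 1) := by
        simp only [hz, hw]; ring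
      have := hbits i (by omega)
      rw [hxz, bitAt_add_int_mul (by have := hmono i hi; omega) _ a,
        bitAt_add_int_mul (hmono i hi) z (ε j)] at this
      exact this
    · have hcast : ((a.toNat : ℕ) : ℝ) = (a : ℝ) := by
        exact_mod_cast Int.toNat_of_nonneg ha0
      simp only [hz, hw, hcast]; ring
  · rintro ⟨u, hu, z, ⟨hz0, hz1, hbits⟩, rfl⟩
    have hc0 : (0:ℝ) ≤ (u:ℝ) * 2^(p j + 1) + (ε j : ℝ) * 2^(p j) := by
      rcases hε with h | h <;> simp [h] <;> positivity
    refine ⟨by linarith, ?_, ?_⟩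
    · have hεj : (ε j : ℝ) * 2^(p j) + z < 2^(p j + 1) := by
        rcases hε with h | h <;> rw [h] <;> push_cast <;> rw [h2pj1] <;> linarith
      have hu' : (u:ℝ) + 1 ≤ ((2^(T - p j - 1).toNat : ℤ) : ℝ) := by
        exact_mod_cast Nat.succ_le_of_lt hu
      have h2pj1' : (0:ℝ) < 2^(p j + 1) := two_zpow_pos _
      rw [hTsplit]
      nlinarith
    · intro i hi
      rcases Nat.lt_succ_iff_lt_or_eq.1 hi with hij | rfl
      · have e1 : (u:ℝ) * 2^(p j + 1) + (ε j : ℝ) * 2^(p j) + z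
            = z + (ε j : ℝ) * 2^(p j) + (u:ℝ) * 2^(p j + 1) := by ring
        rw [e1]
        have h2 := bitAt_add_int_mul (by have := hmono i hij; omega : p i < p j + 1)
          (z + (ε j : ℝ) * 2^(p j)) (u:ℤ)
        push_cast at h2
        rw [h2]
        have h3 := bitAt_add_int_mul (hmono i hij) z (ε j)
        push_cast at h3
        rw [h3]
        exact hbits i hij
      · have := bitAt_pattern (p := p i) (u:ℤ) (ε i) hε hz0 hz1
        push_cast at this
        exact this

lemma bset_subset_Ico (j : ℕ) (p ε : ℕ → ℤ) (T : ℤ) :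
    bset j p ε T ⊆ Set.Ico 0 ((2:ℝ)^T) := fun x hx => ⟨hx.1, hx.2.1⟩

lemma bset_volume (j : ℕ) (p ε : ℕ → ℤ) (T : ℤ)
    (hmono : ∀ a b, a < b → b < j → p a < p b) (hT : ∀ i < j, p i < T)
    (hε : ∀ i < j, ε i = 0 ∨ ε i = 1) :
    volume (bset j p ε T) = ENNReal.ofReal ((2:ℝ)^(T - (j:ℤ))) := by
  induction j generalizing T with
  | zero =>
    have : bset 0 p ε T = Set.Ico 0 ((2:ℝ)^T) := by
      ext x; simp [bset]
    rw [this, Real.volume_Ico]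
    norm_num
  | succ j ih =>
    have hpj : p j < T := hT j (Nat.lt_succ_self j)
    have hmj : ∀ i < j, p i < p j := fun i hi => hmono i j hi (Nat.lt_succ_self j)
    have hεj : ε j = 0 ∨ ε j = 1 := hε j (Nat.lt_succ_self j)
    rw [bset_succ j p ε T hpj hmj hεj]
    have h2pj : (0:ℝ) < 2^(p j) := two_zpow_pos _
    have h2pj1 : (2:ℝ)^(p j + 1) = 2 * 2^(p j) := by
      rw [zpow_add_one₀ (two_ne_zero)]; ring
    have hsub : ∀ u : ℕ, (((u:ℝ) * 2^(p j + 1) + (ε j : ℝ) * 2^(p j)) +ᵥ bset j p ε (p j))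
        ⊆ Set.Ico ((u:ℝ) * 2^(p j + 1) + (ε j : ℝ) * 2^(p j))
          ((u:ℝ) * 2^(p j + 1) + (ε j : ℝ) * 2^(p j) + 2^(p j)) := by
      rintro u y hy
      rw [Set.mem_vadd_set] at hy
      obtain ⟨z, hz, rfl⟩ := hy
      simp only [vadd_eq_add, Set.mem_Ico]
      constructor
      · linarith [hz.1]
      · linarith [hz.2.1]
    have hdisj : (↑(Finset.range (2^(T - p j - 1).toNat)) : Set ℕ).Pairwise
        (Function.onFun Disjoint fun u : ℕ =>
          (((u:ℝ) * 2^(p j + 1) + (ε j : ℝ) * 2^(p j)) +ᵥ bset j p ε (p j))) := by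
      have key : ∀ u v : ℕ, u < v → Disjoint
          (((u:ℝ) * 2^(p j + 1) + (ε j : ℝ) * 2^(p j)) +ᵥ bset j p ε (p j))
          (((v:ℝ) * 2^(p j + 1) + (ε j : ℝ) * 2^(p j)) +ᵥ bset j p ε (p j)) := by
        intro u v huv
        apply Set.disjoint_left.2
        intro y hyu hyv
        have h1 := hsub u hyu
        have h2 := hsub v hyv
        simp only [Set.mem_Ico] at h1 h2
        have hε2 : (ε j : ℝ) * 2^(p j) + 2^(p j) ≤ 2^(p j + 1) := by
          rcases hεj with h | h <;> rw [h] <;> push_cast <;> rw [h2pj1] <;> linarith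
        have huv1 : (u:ℝ) + 1 ≤ (v:ℝ) := by exact_mod_cast Nat.succ_le_of_lt huv
        nlinarith [h1.2, h2.1, two_zpow_pos (p j + 1)]
      intro u _ v _ huv
      rcases lt_or_gt_of_ne huv with h | h
      · exact key u v h
      · exact (key v u h).symm
    rw [measure_biUnion_finset hdisj
      (fun u _ => (measurableSet_bset j p ε (p j)).const_vadd _)]
    have hpiece : ∀ u : ℕ, volume
        (((u:ℝ) * 2^(p j + 1) + (ε j : ℝ) * 2^(p j)) +ᵥ bset j p ε (p j))
        = ENNReal.ofReal ((2:ℝ)^(p j - (j:ℤ))) := by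
      intro u
      rw [measure_vadd]
      exact ih (p j) (fun a b hab hbj => hmono a b hab (by omega))
        (fun i hi => hmj i hi) (fun i hi => hε i (by omega))
    simp only [hpiece]
    rw [Finset.sum_const, Finset.card_range, nsmul_eq_mul]
    have hcard : (2:ℝ≥0∞) ^ (T - p j - 1).toNat
        = ENNReal.ofReal ((2:ℝ)^(T - p j - 1)) := by
      rw [show ((2:ℝ)^(T - p j - 1)) = (2:ℝ)^((T - p j - 1).toNat) by
        rw [← zpow_natCast]; congr 1; omega]
      rw [ENNReal.ofReal_pow (by norm_num : (0:ℝ) ≤ 2)]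
      norm_num
    push_cast
    rw [hcard, ← ENNReal.ofReal_mul (by positivity)]
    congr 1
    rw [← zpow_add₀ (two_ne_zero : (2:ℝ) ≠ 0)]
    congr 1
    push_cast
    ring

lemma key_subset (k i : ℕ) (P : ℕ → ℤ) (hP : ∀ a b : ℕ, a < b → b ≤ k → P a < P b)
    (hi1 : 1 ≤ i) (hik : i ≤ k) (t : ℤ) (ht1 : P (i-1) < t) (ht2 : t ≤ P i)
    (x : ℝ) (hx0 : 0 ≤ x) (hxS : x < 2^(P k))
    (hbits : ∀ r : ℕ, i ≤ r → r < k → bitAt (P r) x = 0) :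
    (((⌊x / 2^t⌋ : ℤ) : ℝ) * 2^t) +ᵥ bset i P (fun _ => 0) t ⊆
      bset k P (fun _ => 0) (P k) ∩
        Set.Icc (((⌊x / 2^t⌋ : ℤ) : ℝ) * 2^t) (((⌊x / 2^t⌋ : ℤ) : ℝ) * 2^t + 2^t) := by
  have h2t : (0:ℝ) < 2^t := two_zpow_pos t
  set a : ℤ := ⌊x / 2^t⌋ with ha
  have ha0 : 0 ≤ a := Int.floor_nonneg.2 (by positivity)
  have htPk : t ≤ P k := by
    rcases eq_or_lt_of_le hik with h | h
    · rw [← h]; exact ht2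
    · exact ht2.trans (hP i k h le_rfl).le
  have hxc1 : (a:ℝ) * 2^t ≤ x := (le_div_iff₀ h2t).1 (Int.floor_le _)
  have hxc2 : x < ((a:ℝ) + 1) * 2^t := by
    rw [← div_lt_iff₀ h2t]; push_cast; exact Int.lt_floor_add_one _
  have hsplit : (2:ℝ)^(P k) = ((2^(P k - t).toNat : ℤ) : ℝ) * 2^t := by
    rw [← two_zpow_cast (P k - t) (by omega), ← zpow_add₀ (two_ne_zero)]
    ring_nf
  have haN : a + 1 ≤ 2^(P k - t).toNat := by
    have : x / 2^t < ((2^(P k - t).toNat : ℤ) : ℝ) := by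
      rw [div_lt_iff₀ h2t, ← hsplit]; exact hxS
    have := Int.floor_lt.2 this
    omega
  rintro y hy
  rw [Set.mem_vadd_set] at hy
  obtain ⟨z, ⟨hz0, hz1, hzbits⟩, rfl⟩ := hy
  simp only [vadd_eq_add]
  have hyc1 : (a:ℝ) * 2^t ≤ (a:ℝ) * 2^t + z := by linarith
  have hyc2 : (a:ℝ) * 2^t + z < ((a:ℝ) + 1) * 2^t := by ring_nf; nlinarith
  have ha0' : (0:ℝ) ≤ (a:ℝ) := by exact_mod_cast ha0
  have hc0 : (0:ℝ) ≤ (a:ℝ) * 2^t := by positivity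
  constructor
  · refine ⟨by linarith, ?_, ?_⟩
    · have : ((a:ℝ) + 1) * 2^t ≤ 2^(P k) := by
        rw [hsplit]
        have : ((a:ℝ) + 1) ≤ ((2^(P k - t).toNat : ℤ) : ℝ) := by exact_mod_cast haN
        nlinarith
      linarith
    · intro r hr
      rcases lt_or_ge r i with hri | hri
      · have hPr : P r < t := by
          rcases eq_or_lt_of_le (by omega : r ≤ i - 1) with h | h
          · rw [h]; exact ht1
          · exact (hP r (i-1) h (by omega)).trans ht1
        have e1 : (a:ℝ) * 2^t + z = z + (a:ℝ) * 2^t := by ring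
        rw [e1, bitAt_add_int_mul hPr z a]
        exact hzbits r hri
      · have hPr : t ≤ P r := by
          rcases eq_or_lt_of_le hri with h | h
          · rw [← h]; exact ht2
          · exact ht2.trans (hP i r h (by omega)).le
        rw [bitAt_high_eq hPr a hyc1 hyc2 hxc1 hxc2]
        exact hbits r hri hr
  · exact ⟨by linarith, by linarith⟩

lemma prod_two_zpow {ι : Type*} (s' : Finset ι) (e : ι → ℤ) :
    ∏ j ∈ s', (2:ℝ)^(e j) = (2:ℝ)^(∑ j ∈ s', e j) := by
  induction s' using Finset.cons_induction with
  | empty => simp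
  | cons a s ha ih => rw [Finset.prod_cons, Finset.sum_cons, ih, zpow_add₀ two_ne_zero]

lemma steps_mono (P : ℕ → ℤ) (k : ℕ) (h : ∀ m < k, P m < P (m+1)) :
    ∀ a b : ℕ, a < b → b ≤ k → P a < P b := by
  intro a b hab hbk
  induction b with
  | zero => omega
  | succ b ih =>
    rcases Nat.lt_succ_iff_lt_or_eq.1 hab with h1 | h1
    · exact (ih h1 (by omega)).trans (h b (by omega))
    · rw [h1]; exact h b (by omega)

/-- `F_j`: the one-dimensional Cantor-type set used in direction `j`. -/
def Fset (k : ℕ) (P : ℕ → ℤ) : Set ℝ := bset k P (fun _ => 0) (P k)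

/-- The region set in direction `j` for eccentricity index `i`. -/
def Aset (k : ℕ) (P : ℕ → ℤ) (i : ℕ) : Set ℝ :=
  bset (k - i + 1) (fun r => P (i - 1 + r)) (fun r => if r = 0 then 1 else 0) (P k)

lemma Fset_volume (k : ℕ) (P : ℕ → ℤ) (h : ∀ m < k, P m < P (m+1)) :
    volume (Fset k P) = ENNReal.ofReal ((2:ℝ)^(P k - (k:ℤ))) :=
  bset_volume k P _ (P k)
    (fun a b hab hbk => steps_mono P k h a b hab (by omega))
    (fun i hi => steps_mono P k h i k hi le_rfl) (fun _ _ => Or.inl rfl)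

lemma Aset_volume (k : ℕ) (P : ℕ → ℤ) (h : ∀ m < k, P m < P (m+1)) (i : ℕ)
    (hi1 : 1 ≤ i) (hik : i ≤ k) :
    volume (Aset k P i) = ENNReal.ofReal ((2:ℝ)^(P k - ((k - i + 1 : ℕ) : ℤ))) := by
  apply bset_volume (k - i + 1) _ _ (P k)
  · intro a b hab hb
    exact steps_mono P k h (i - 1 + a) (i - 1 + b) (by omega) (by omega)
  · intro r hr
    exact steps_mono P k h (i - 1 + r) k (by omega) le_rfl
  · intro r _
    by_cases hr : r = 0 <;> simp [hr]

lemma exists_coord_lt {n : ℕ} (m m' : Fin n → ℕ) (hsum : ∑ j, m j = ∑ j, m' j)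
    (hne : m ≠ m') : ∃ j, m j < m' j := by
  by_contra h'
  push_neg at h'
  have hle : ∀ j, m' j ≤ m j := h'
  have heq : ∀ j ∈ Finset.univ, m' j = m j := by
    intro j _
    by_contra hj
    have hlt : m' j < m j := lt_of_le_of_ne (hle j) hj
    have : ∑ j, m' j < ∑ j, m j :=
      Finset.sum_lt_sum (fun i _ => hle i) ⟨j, Finset.mem_univ j, hlt⟩
    omega
  exact hne (funext fun j => (heq j (Finset.mem_univ j)).symm)

lemma Aset_disjoint (k : ℕ) (P : ℕ → ℤ) (i i' : ℕ) (hi1 : 1 ≤ i) (hii' : i < i')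
    (hi'k : i' ≤ k) : Aset k P i ∩ Aset k P i' = ∅ := by
  ext x
  simp only [Set.mem_inter_iff, Set.mem_empty_iff_false, iff_false, not_and]
  intro hx hx'
  obtain ⟨-, -, hb⟩ := hx
  obtain ⟨-, -, hb'⟩ := hx'
  have h1 : bitAt (P (i' - 1)) x = 1 := by
    have := hb' 0 (by omega)
    simpa using this
  have h0 : bitAt (P (i' - 1)) x = 0 := by
    have := hb (i' - i) (by omega)
    simp only at this
    rw [show i - 1 + (i' - i) = i' - 1 by omega, if_neg (by omega : ¬ i' - i = 0)] at this
    exact this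
  rw [h0] at h1
  exact absurd h1 (by norm_num)


lemma ofReal_prod_zpow {n : ℕ} (e : Fin n → ℤ) :
    ∏ j, ENNReal.ofReal ((2:ℝ)^(e j)) = ENNReal.ofReal ((2:ℝ)^(∑ j, e j)) := by
  rw [← ENNReal.ofReal_prod_of_nonneg (fun j _ => (two_zpow_pos (e j)).le),
    prod_two_zpow]

lemma ofReal_two_zpow_neg_nat (k : ℕ) :
    ENNReal.ofReal ((2:ℝ)^(-(k:ℤ))) = 1/2^k := by
  rw [zpow_neg, ENNReal.ofReal_inv_of_pos (two_zpow_pos _), one_div]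
  congr 1
  rw [zpow_natCast, ENNReal.ofReal_pow (by norm_num : (0:ℝ) ≤ 2)]
  norm_num

lemma gset_le_maxOp {n : ℕ} (k : ℕ) (s : Fin n → ℕ → ℤ)
    (hs : ∀ j, ∀ m, m < k → s j m < s j (m+1))
    (B : Set (BoxInterval n)) (hB : IsRareBasis B)
    (m : Fin n → ℕ) (hm1 : ∀ j, 1 ≤ m j) (hmk : ∀ j, m j ≤ k)
    (hsum : ∑ j, m j = k)
    (R : BoxInterval n) (hRB : R ∈ B)
    (t : Fin n → ℤ) (ht : ∀ j, R.side j = (2:ℝ)^(t j))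
    (htlo : ∀ j, s j (m j - 1) < t j) (hthi : ∀ j, t j ≤ s j (m j))
    (x : Fin n → ℝ) (hx : ∀ j, x j ∈ Aset k (s j) (m j)) :
    (1:ℝ≥0∞)/2^k ≤
      maxOp B ((Set.univ.pi fun j => Fset k (s j)).indicator fun _ => (1:ℝ)) x := by
  classical
  set E : Set (Fin n → ℝ) := Set.univ.pi fun j => Fset k (s j) with hE
  have hEmeas : MeasurableSet E :=
    MeasurableSet.univ_pi fun j => measurableSet_bset _ _ _ _
  set c : Fin n → ℝ := fun j => ((⌊x j / 2^(t j)⌋ : ℤ) : ℝ) * 2^(t j) with hc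
  set R' : BoxInterval n := R.translate (fun j => c j - R.a j) with hR'
  have hR'B : R' ∈ B := hB.2 R hRB _
  have hR'side : ∀ j, R'.b j = c j + 2^(t j) := by
    intro j
    show R.b j + (c j - R.a j) = c j + 2^(t j)
    have := ht j
    unfold BoxInterval.side at this
    linarith
  have hR'a : ∀ j, R'.a j = c j := by
    intro j
    show R.a j + (c j - R.a j) = c j
    ring
  have hR'set : R'.toSet = Set.univ.pi fun j => Set.Icc (c j) (c j + 2^(t j)) := by
    have hfun : (fun j => Set.Icc (R'.a j) (R'.b j))
        = fun j => Set.Icc (c j) (c j + 2^(t j)) :=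
      funext fun j => by rw [hR'a j, hR'side j]
    show Set.univ.pi (fun j => Set.Icc (R'.a j) (R'.b j)) = _
    rw [hfun]
  -- the aligned sub-boxes of E
  set K : Fin n → Set ℝ := fun j => c j +ᵥ bset (m j) (s j) (fun _ => 0) (t j) with hK
  have hkey : ∀ j, K j ⊆ Fset k (s j) ∩ Set.Icc (c j) (c j + 2^(t j)) := by
    intro j
    obtain ⟨hx0, hxS, hxbits⟩ := hx j
    apply key_subset k (m j) (s j) (fun a b hab hbk => steps_mono (s j) k (hs j) a b hab hbk)
      (hm1 j) (hmk j) (t j) (htlo j) (hthi j) (x j) hx0 hxS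
    intro r hr1 hr2
    have hm1j : 1 ≤ m j := hm1 j
    have hmkj : m j ≤ k := hmk j
    have := hxbits (r - m j + 1) (by omega)
    simp only at this
    rw [show m j - 1 + (r - m j + 1) = r by omega,
      if_neg (by omega : ¬ r - m j + 1 = 0)] at this
    exact this
  have hxR' : x ∈ R'.toSet := by
    rw [hR'set]
    intro j _
    have h2t : (0:ℝ) < 2^(t j) := two_zpow_pos _
    constructor
    · exact (le_div_iff₀ h2t).1 (Int.floor_le _)
    · have : x j / 2^(t j) < (⌊x j / 2^(t j)⌋ : ℝ) + 1 := Int.lt_floor_add_one _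
      rw [div_lt_iff₀ h2t] at this
      simp only [hc]
      nlinarith
  -- volume computations
  have hvolR' : volume R'.toSet = ENNReal.ofReal ((2:ℝ)^(∑ j, t j)) := by
    rw [hR'set, volume_pi_pi, ← ofReal_prod_zpow]
    congr 1
    funext j
    rw [Real.volume_Icc]
    congr 1
    ring
  have hvolK : volume (Set.univ.pi K) = ENNReal.ofReal ((2:ℝ)^(∑ j, (t j - (m j : ℤ)))) := by
    rw [volume_pi_pi, ← ofReal_prod_zpow]
    congr 1
    funext j
    rw [hK]
    simp only
    rw [measure_vadd]
    have hm1j : 1 ≤ m j := hm1 j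
    have hmkj : m j ≤ k := hmk j
    apply bset_volume
    · intro a b hab hbm
      exact steps_mono (s j) k (hs j) a b hab (by omega)
    · intro i hi
      rcases eq_or_lt_of_le (by omega : i ≤ m j - 1) with h | h
      · rw [h]; exact htlo j
      · exact (steps_mono (s j) k (hs j) i (m j - 1) h (by omega)).trans (htlo j)
    · intro i _; exact Or.inl rfl
  have hKsub : Set.univ.pi K ⊆ E ∩ R'.toSet := by
    intro y hy
    constructor
    · intro j hj
      exact (hkey j (hy j hj)).1
    · rw [hR'set]
      intro j hj
      exact (hkey j (hy j hj)).2
  -- the average over R' is at least 2^{-k}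
  have hnum : (∫⁻ y in R'.toSet,
      ENNReal.ofReal |(E.indicator fun _ => (1:ℝ)) y| ∂volume) = volume (E ∩ R'.toSet) := by
    have hind : ∀ y, ENNReal.ofReal |(E.indicator fun _ => (1:ℝ)) y|
        = E.indicator (fun _ => (1:ℝ≥0∞)) y := by
      intro y
      by_cases hy : y ∈ E
      · simp [Set.indicator_of_mem hy]
      · simp [Set.indicator_of_notMem hy]
    simp_rw [hind]
    rw [lintegral_indicator hEmeas, setLIntegral_one, Measure.restrict_apply hEmeas]
  have hlow : ENNReal.ofReal ((2:ℝ)^(∑ j, (t j - (m j : ℤ)))) ≤ volume (E ∩ R'.toSet) := by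
    rw [← hvolK]
    exact measure_mono hKsub
  have hsplit : ENNReal.ofReal ((2:ℝ)^(∑ j, (t j - (m j : ℤ))))
      = (1/2^k) * ENNReal.ofReal ((2:ℝ)^(∑ j, t j)) := by
    rw [← ofReal_two_zpow_neg_nat k, ← ENNReal.ofReal_mul (two_zpow_pos _).le,
      ← zpow_add₀ (two_ne_zero : (2:ℝ) ≠ 0)]
    congr 1
    rw [Finset.sum_sub_distrib]
    have hcast : ∑ j, ((m j : ℤ)) = (k : ℤ) := by exact_mod_cast hsum
    rw [hcast]
    ring
  -- assemble
  have hfinal : (1:ℝ≥0∞)/2^k ≤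
      (∫⁻ y in R'.toSet, ENNReal.ofReal |(E.indicator fun _ => (1:ℝ)) y| ∂volume)
        / volume R'.toSet := by
    rw [hnum, hvolR', ENNReal.le_div_iff_mul_le
      (Or.inl (ne_of_gt (ENNReal.ofReal_pos.2 (two_zpow_pos _))))
      (Or.inl ENNReal.ofReal_ne_top)]
    rw [← hsplit]
    exact hlow
  refine hfinal.trans ?_
  exact le_iSup_of_le R' (le_iSup_of_le hR'B (le_iSup_of_le hxR' le_rfl))

end AuxRare

/-- Lemma 3: for every `k ≥ n` and increasing integer sequences `(s_{j,m})_{m=0}^k` there is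
a bounded set `E` of positive measure such that for any rare basis `B`, with `Ω` the set of
tuples of `Ω_{n,k}` realized by boxes of `B` with dyadic side lengths in the prescribed
ranges, `|{M_B χ_E ≥ 2^{-k}}| ≥ cₙ card(Ω) 2^k |E|`. -/
theorem statement5 (n : ℕ) (hn : 1 ≤ n) :
    ∃ c : ℝ, 0 < c ∧
      ∀ k : ℕ, n ≤ k → ∀ s : Fin n → ℕ → ℤ,
        (∀ j, ∀ m, m < k → s j m < s j (m + 1)) →
        ∃ E : Set (Fin n → ℝ), Bornology.IsBounded E ∧ MeasurableSet E ∧ 0 < volume E ∧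
          ∀ B : Set (BoxInterval n), IsRareBasis B →
            ENNReal.ofReal c *
                ({m ∈ OmegaNK n k | ∃ R ∈ B, (∀ j, ∃ t : ℤ, R.side j = (2:ℝ) ^ t) ∧
                    ∀ j, R.side j ∈ Set.Ioc ((2:ℝ) ^ s j (m j - 1))
                      ((2:ℝ) ^ s j (m j))}.ncard : ℝ≥0∞) *
                (2 ^ k * volume E) ≤
              volume {x | (1:ℝ≥0∞) / 2 ^ k ≤ maxOp B (E.indicator fun _ => (1:ℝ)) x} := by
  classical
  refine ⟨(2:ℝ)^(-(n:ℤ)), two_zpow_pos _, ?_⟩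
  intro k hk s hs
  set W : ℤ := ∑ j, s j k with hW
  set E : Set (Fin n → ℝ) := Set.univ.pi fun j => Fset k (s j) with hEdef
  have hEmeas : MeasurableSet E :=
    MeasurableSet.univ_pi fun j => measurableSet_bset _ _ _ _
  have hEvol : volume E = ENNReal.ofReal ((2:ℝ)^(W - (n:ℤ)*k)) := by
    rw [hEdef, volume_pi_pi]
    rw [Finset.prod_congr rfl fun j _ => Fset_volume k (s j) (hs j), ofReal_prod_zpow]
    have he : (∑ j, (s j k - (k:ℤ))) = W - (n:ℤ)*k := by
      rw [Finset.sum_sub_distrib, Finset.sum_const, Finset.card_univ, Fintype.card_fin,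
        nsmul_eq_mul, hW]
    rw [he]
  have hbounded : Bornology.IsBounded E := by
    rw [Metric.isBounded_iff_subset_closedBall 0]
    refine ⟨∑ j, (2:ℝ)^(s j k), fun x hx => ?_⟩
    rw [Metric.mem_closedBall, dist_zero_right]
    have hr : (0:ℝ) ≤ ∑ j, (2:ℝ)^(s j k) :=
      Finset.sum_nonneg fun j _ => (two_zpow_pos _).le
    rw [pi_norm_le_iff_of_nonneg hr]
    intro j
    obtain ⟨hx0, hx1, -⟩ := hx j (Set.mem_univ j)
    rw [Real.norm_eq_abs, abs_of_nonneg hx0]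
    calc x j ≤ (2:ℝ)^(s j k) := hx1.le
    _ ≤ ∑ j', (2:ℝ)^(s j' k) :=
      Finset.single_le_sum (f := fun j' => (2:ℝ)^(s j' k))
        (fun j' _ => (two_zpow_pos _).le) (Finset.mem_univ j)
  refine ⟨E, hbounded, hEmeas, by rw [hEvol]; exact ENNReal.ofReal_pos.2 (two_zpow_pos _), ?_⟩
  intro B hB
  have hfin : {m ∈ OmegaNK n k | ∃ R ∈ B, (∀ j, ∃ t : ℤ, R.side j = (2:ℝ) ^ t) ∧
      ∀ j, R.side j ∈ Set.Ioc ((2:ℝ) ^ s j (m j - 1))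
        ((2:ℝ) ^ s j (m j))}.Finite := by
    apply Set.Finite.subset (Set.Finite.pi fun j : Fin n => Set.finite_Iic k)
    intro m hm
    obtain ⟨⟨hm1, hm2⟩, -⟩ := hm
    intro j _
    refine Set.mem_Iic.2 ?_
    calc m j ≤ ∑ j', m j' :=
      Finset.single_le_sum (fun i _ => Nat.zero_le _) (Finset.mem_univ j)
    _ = k := hm2
  set F := hfin.toFinset with hFdef
  have hmemF : ∀ m ∈ F, (m ∈ OmegaNK n k ∧ ∃ R ∈ B,
      (∀ j, ∃ t : ℤ, R.side j = (2:ℝ) ^ t) ∧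
      ∀ j, R.side j ∈ Set.Ioc ((2:ℝ) ^ s j (m j - 1)) ((2:ℝ) ^ s j (m j))) :=
    fun m hm => hfin.mem_toFinset.1 hm
  have hmk : ∀ m ∈ F, ∀ j, m j ≤ k := by
    intro m hm j
    obtain ⟨⟨hm1, hm2⟩, -⟩ := hmemF m hm
    calc m j ≤ ∑ j', m j' :=
      Finset.single_le_sum (fun i _ => Nat.zero_le _) (Finset.mem_univ j)
    _ = k := hm2
  -- Step A: each region lies in the superlevel set of the maximal operator
  have hGsub : ∀ m ∈ F, (Set.univ.pi fun j => Aset k (s j) (m j)) ⊆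
      {x | (1:ℝ≥0∞) / 2 ^ k ≤ maxOp B (E.indicator fun _ => (1:ℝ)) x} := by
    intro m hm x hx
    obtain ⟨⟨hm1, hm2⟩, R, hRB, hdy, hrange⟩ := hmemF m hm
    choose t ht using hdy
    have htlo : ∀ j, s j (m j - 1) < t j := by
      intro j
      have h1 := (hrange j).1
      rw [ht j] at h1
      exact (zpow_lt_zpow_iff_right₀ (by norm_num : (1:ℝ) < 2)).1 h1
    have hthi : ∀ j, t j ≤ s j (m j) := by
      intro j
      have h1 := (hrange j).2
      rw [ht j] at h1
      exact (zpow_le_zpow_iff_right₀ (by norm_num : (1:ℝ) < 2)).1 h1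
    exact gset_le_maxOp k s hs B hB m hm1 (hmk m hm) hm2 R hRB t ht htlo hthi x
      (fun j => hx j (Set.mem_univ j))
  -- Step B: the regions are pairwise disjoint
  have hGdisj : (↑F : Set (Fin n → ℕ)).Pairwise (Function.onFun Disjoint
      fun m => Set.univ.pi fun j => Aset k (s j) (m j)) := by
    intro m hm m' hm' hne
    have hmF : m ∈ F := hm
    have hmF' : m' ∈ F := hm'
    obtain ⟨⟨hm1, hm2⟩, -⟩ := hmemF m hmF
    obtain ⟨⟨hm1', hm2'⟩, -⟩ := hmemF m' hmF'
    obtain ⟨j, hj⟩ := exists_coord_lt m m' (by rw [hm2, hm2']) hne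
    apply Set.disjoint_left.2
    intro x hxm hxm'
    have h1 : x j ∈ Aset k (s j) (m j) := hxm j (Set.mem_univ j)
    have h2 : x j ∈ Aset k (s j) (m' j) := hxm' j (Set.mem_univ j)
    have hd := Aset_disjoint k (s j) (m j) (m' j) (hm1 j) hj (hmk m' hmF' j)
    have : x j ∈ (∅ : Set ℝ) := hd ▸ Set.mem_inter h1 h2
    exact this
  -- Step C: volume of each region
  have hvolG : ∀ m ∈ F, volume (Set.univ.pi fun j => Aset k (s j) (m j))
      = ENNReal.ofReal ((2:ℝ)^(W - (n:ℤ)*k + k - n)) := by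
    intro m hm
    obtain ⟨⟨hm1, hm2⟩, -⟩ := hmemF m hm
    rw [volume_pi_pi,
      Finset.prod_congr rfl fun j _ => Aset_volume k (s j) (hs j) (m j) (hm1 j) (hmk m hm j),
      ofReal_prod_zpow]
    congr 1
    have hc : ∀ j, ((k - m j + 1 : ℕ) : ℤ) = (k:ℤ) - (m j : ℤ) + 1 := by
      intro j
      have := hmk m hm j
      omega
    rw [Finset.sum_sub_distrib]
    rw [Finset.sum_congr rfl fun j _ => hc j]
    have hsummj : ∑ j, ((m j : ℤ)) = (k:ℤ) := by exact_mod_cast hm2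
    rw [Finset.sum_add_distrib, Finset.sum_sub_distrib, hsummj, Finset.sum_const,
      Finset.sum_const, Finset.card_univ, Fintype.card_fin, hW]
    push_cast
    ring
  -- conclude
  have hGmeas : ∀ m ∈ F, MeasurableSet (Set.univ.pi fun j => Aset k (s j) (m j)) :=
    fun m _ => MeasurableSet.univ_pi fun j => measurableSet_bset _ _ _ _
  have hcard : ({m ∈ OmegaNK n k | ∃ R ∈ B, (∀ j, ∃ t : ℤ, R.side j = (2:ℝ) ^ t) ∧
      ∀ j, R.side j ∈ Set.Ioc ((2:ℝ) ^ s j (m j - 1))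
        ((2:ℝ) ^ s j (m j))}.ncard : ℝ≥0∞) = (F.card : ℝ≥0∞) := by
    rw [Set.ncard_eq_toFinset_card _ hfin]
  have h2k : (2:ℝ≥0∞)^k = ENNReal.ofReal ((2:ℝ)^(k:ℤ)) := by
    rw [zpow_natCast, ENNReal.ofReal_pow (by norm_num : (0:ℝ) ≤ 2)]
    norm_num
  calc ENNReal.ofReal ((2:ℝ)^(-(n:ℤ))) *
      ({m ∈ OmegaNK n k | ∃ R ∈ B, (∀ j, ∃ t : ℤ, R.side j = (2:ℝ) ^ t) ∧
        ∀ j, R.side j ∈ Set.Ioc ((2:ℝ) ^ s j (m j - 1))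
          ((2:ℝ) ^ s j (m j))}.ncard : ℝ≥0∞) * (2 ^ k * volume E)
      = ∑ m ∈ F, volume (Set.univ.pi fun j => Aset k (s j) (m j)) := by
        rw [Finset.sum_congr rfl hvolG, Finset.sum_const, nsmul_eq_mul, hcard, hEvol, h2k]
        have hmerge : ENNReal.ofReal ((2:ℝ)^(-(n:ℤ))) *
            (ENNReal.ofReal ((2:ℝ)^(k:ℤ)) * ENNReal.ofReal ((2:ℝ)^(W - (n:ℤ)*k)))
            = ENNReal.ofReal ((2:ℝ)^(W - (n:ℤ)*k + k - n)) := by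
          rw [← ENNReal.ofReal_mul (two_zpow_pos _).le,
            ← ENNReal.ofReal_mul (two_zpow_pos _).le,
            ← zpow_add₀ (two_ne_zero : (2:ℝ) ≠ 0),
            ← zpow_add₀ (two_ne_zero : (2:ℝ) ≠ 0)]
          congr 1
          ring
        rw [← hmerge]
        ring
    _ = volume (⋃ m ∈ F, Set.univ.pi fun j => Aset k (s j) (m j)) :=
        (measure_biUnion_finset hGdisj hGmeas).symm
    _ ≤ volume {x | (1:ℝ≥0∞) / 2 ^ k ≤ maxOp B (E.indicator fun _ => (1:ℝ)) x} :=
        measure_mono (Set.iUnion₂_subset hGsub)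


end
end

section
/- If the spectrum of a rare basis B in ℝⁿ is dense in S₁×⋯×Sₙ for some infinite sets S₁,…,Sₙ ⊂ ℤ, then B is Ω_{n,k}-complete for every k ≥ n. -/
open MeasureTheory Set
open scoped ENNReal

noncomputable section

/-- From a set unbounded above, extract a sequence with prescribed gaps. -/
private lemma exists_gap_seq_up (S : Set ℤ) (h : ∀ b : ℤ, ∃ x ∈ S, b < x) (d : ℤ) :
    ∃ τ : ℕ → ℤ, (∀ r, τ r ∈ S) ∧ ∀ r, τ r + d < τ (r + 1) := by
  choose g hgS hgt using h
  refine ⟨fun r => Nat.rec (g 0) (fun _ p => g (p + d)) r, fun r => ?_, fun r => hgt _⟩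
  cases r with
  | zero => exact hgS 0
  | succ r => exact hgS _

/-- From an infinite subset of `ℤ`, extract `k` terms with prescribed gaps. -/
private lemma exists_gap_seq (S : Set ℤ) (hS : S.Infinite) (d : ℤ) (k : ℕ) :
    ∃ τ : ℕ → ℤ, (∀ r < k, τ r ∈ S) ∧ ∀ r, r + 1 < k → τ r + d < τ (r + 1) := by
  by_cases h : ∀ b : ℤ, ∃ x ∈ S, b < x
  · obtain ⟨τ, h1, h2⟩ := exists_gap_seq_up S h d
    exact ⟨τ, fun r _ => h1 r, fun r _ => h2 r⟩
  · push_neg at h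
    obtain ⟨b, hb⟩ := h
    have hlow : ∀ c : ℤ, ∃ x ∈ S, x < c := by
      intro c
      by_contra hc
      push_neg at hc
      exact hS (Set.Finite.subset (Set.finite_Icc c b) fun x hx => ⟨hc x hx, hb x hx⟩)
    have h' : ∀ c : ℤ, ∃ x ∈ (Neg.neg '' S : Set ℤ), c < x := by
      intro c
      obtain ⟨x, hx, hlt⟩ := hlow (-c)
      exact ⟨-x, ⟨x, hx, rfl⟩, by linarith⟩
    obtain ⟨σ, h1, h2⟩ := exists_gap_seq_up _ h' d
    refine ⟨fun r => -σ (k - 1 - r), fun r _ => ?_, fun r hr => ?_⟩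
    · show -σ (k - 1 - r) ∈ S
      obtain ⟨x, hx, hxe⟩ := h1 (k - 1 - r)
      rw [← hxe, neg_neg]
      exact hx
    · show -σ (k - 1 - r) + d < -σ (k - 1 - (r + 1))
      have hgap := h2 (k - 1 - (r + 1))
      rw [show k - 1 - r = k - 1 - (r + 1) + 1 from by omega]
      linarith

/-- The threshold sequence built from gap centers `τ` and tolerance `Nm`. -/
private def tseq (τ : ℕ → ℤ) (Nm : ℤ) (k : ℕ) : ℕ → ℤ
  | 0 => τ 0 - (Nm + 1)
  | m + 1 => τ (min m (k - 1)) + Nm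

private lemma tseq_mono (τ : ℕ → ℤ) (Nm : ℤ) (k : ℕ) (hNm : 0 ≤ Nm)
    (hgap : ∀ m, m + 1 < k → τ m + (2 * Nm + 1) < τ (m + 1)) :
    ∀ m, m < k → tseq τ Nm k m < tseq τ Nm k (m + 1) := by
  intro m hm
  cases m with
  | zero =>
    show τ 0 - (Nm + 1) < τ (min 0 (k - 1)) + Nm
    rw [Nat.min_eq_left (Nat.zero_le _)]
    linarith
  | succ m' =>
    show τ (min m' (k - 1)) + Nm < τ (min (m' + 1) (k - 1)) + Nm
    rw [show min m' (k - 1) = m' from by omega, show min (m' + 1) (k - 1) = m' + 1 from by omega]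
    have := hgap m' (by omega)
    linarith

private lemma tseq_bound (τ : ℕ → ℤ) (Nm : ℤ) (k r : ℕ) (hNm : 0 ≤ Nm) (hr : r < k)
    (hgap : ∀ m, m + 1 < k → τ m + (2 * Nm + 1) < τ (m + 1)) (ω : ℤ)
    (hlb : -Nm ≤ τ r - ω) (hub : τ r - ω ≤ Nm) :
    tseq τ Nm k r < ω ∧ ω ≤ tseq τ Nm k (r + 1) := by
  constructor
  · cases r with
    | zero =>
      show τ 0 - (Nm + 1) < ω
      linarith
    | succ r' =>
      show τ (min r' (k - 1)) + Nm < ω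
      rw [show min r' (k - 1) = r' from by omega]
      have := hgap r' hr
      linarith
  · show ω ≤ τ (min r (k - 1)) + Nm
    rw [show min r (k - 1) = r from by omega]
    linarith

/-- The key inductive construction: uniform thresholds together with spectrum prefixes
realizing every gap pattern on the first `j` coordinates. -/
private lemma key_construction (n : ℕ) (W : Set (Fin n → ℤ)) (hW : W.Nonempty)
    (S : Fin n → Set ℤ) (hS : ∀ j, (S j).Infinite)
    (hdense : IsDenseIn W S) (k : ℕ) (hk : 1 ≤ k) :
    ∀ j, ∀ hj : j ≤ n, ∃ s : Fin n → ℕ → ℤ,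
      (∀ i, ∀ m, m < k → s i m < s i (m + 1)) ∧
      ∀ f : Fin j → Fin k, ∃ wf ∈ projZ j hj W, ∀ i : Fin j,
        s (Fin.castLE hj i) (f i : ℕ) < wf i ∧ wf i ≤ s (Fin.castLE hj i) ((f i : ℕ) + 1) := by
  intro j
  induction j with
  | zero =>
    intro hj
    refine ⟨fun _ m => (m : ℤ), fun i m _ => ?_, ?_⟩
    · show (m : ℤ) < ((m + 1 : ℕ) : ℤ)
      exact_mod_cast Nat.lt_succ_self m
    · intro f
      obtain ⟨w₀, hw₀⟩ := hW
      exact ⟨fun i => i.elim0, ⟨w₀, hw₀, funext fun i => i.elim0⟩, fun i => i.elim0⟩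
  | succ j ih =>
    intro hj
    have hjn : j < n := hj
    obtain ⟨s, hs, hw⟩ := ih (Nat.le_of_succ_le hj)
    choose w hwmem hwgap using hw
    have hnet := hdense ⟨j, hjn⟩
    choose N hN using fun f : Fin j → Fin k => hnet (w f)
    set Nm : ℕ := Finset.univ.sup N
    have hNle : ∀ f : Fin j → Fin k, N f ≤ Nm := fun f => Finset.le_sup (Finset.mem_univ f)
    have hNm0 : (0 : ℤ) ≤ (Nm : ℤ) := Int.ofNat_nonneg _
    obtain ⟨τ, hτS, hτgap⟩ := exists_gap_seq (S ⟨j, hjn⟩) (hS _) (2 * (Nm : ℤ) + 1) k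
    refine ⟨Function.update s ⟨j, hjn⟩ (tseq τ (Nm : ℤ) k), ?_, ?_⟩
    · intro i m hm
      rcases eq_or_ne i ⟨j, hjn⟩ with rfl | hne
      · rw [Function.update_self]
        exact tseq_mono τ (Nm : ℤ) k hNm0 hτgap m hm
      · rw [Function.update_of_ne hne]
        exact hs i m hm
    · intro f'
      set f : Fin j → Fin k := fun i => f' i.castSucc with hf
      have hτmem : Fin.snoc (w f) (τ ((f' (Fin.last j) : ℕ))) ∈
          {v : Fin (j + 1) → ℤ |
            Fin.init v ∈ projZ j (Nat.le_of_lt hjn) W ∧ v (Fin.last j) ∈ S ⟨j, hjn⟩} := by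
        constructor
        · rw [Fin.init_snoc]
          exact hwmem f
        · rw [Fin.snoc_last]
          exact hτS _ (f' (Fin.last j)).isLt
      obtain ⟨ω, hω, habs⟩ := hN f (τ ((f' (Fin.last j) : ℕ))) hτmem
      rw [abs_le] at habs
      have hNf : (N f : ℤ) ≤ (Nm : ℤ) := by exact_mod_cast hNle f
      have hbd := tseq_bound τ (Nm : ℤ) k ((f' (Fin.last j) : ℕ)) hNm0
        (f' (Fin.last j)).isLt hτgap ω (by linarith [habs.1]) (by linarith [habs.2])
      refine ⟨Fin.snoc (w f) ω, hω, ?_⟩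
      intro i
      refine Fin.lastCases ?_ ?_ i
      · have hcast : Fin.castLE hj (Fin.last j) = (⟨j, hjn⟩ : Fin n) := rfl
        rw [hcast, Fin.snoc_last, Function.update_self]
        exact hbd
      · intro i₀
        have hcast : Fin.castLE hj i₀.castSucc = Fin.castLE (Nat.le_of_succ_le hj) i₀ := rfl
        have hne : Fin.castLE (Nat.le_of_succ_le hj) i₀ ≠ (⟨j, hjn⟩ : Fin n) := by
          intro hcontra
          exact absurd (congrArg Fin.val hcontra) (Nat.ne_of_lt i₀.isLt)
        rw [hcast, Fin.snoc_castSucc, Function.update_of_ne hne]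
        exact hwgap f i₀

/-- If the spectrum of a rare basis `B` in `ℝⁿ` is dense in `S₁ × ⋯ × Sₙ` for some infinite
sets `Sⱼ ⊂ ℤ`, then `B` is `Ω_{n,k}`-complete for every `k ≥ n`. -/
theorem statement7 (n : ℕ) (hn : 1 ≤ n) (B : Set (BoxInterval n)) (hB : IsRareBasis B)
    (S : Fin n → Set ℤ) (hS : ∀ j, (S j).Infinite)
    (hdense : IsDenseIn (spectrumB B) S) :
    ∀ k : ℕ, n ≤ k → OmegaComplete B k (OmegaNK n k) := by
  intro k hk
  have hk1 : 1 ≤ k := hn.trans hk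
  have hW : (spectrumB B).Nonempty := by
    obtain ⟨R, hR⟩ := hB.1
    exact ⟨fun j => ⌈Real.logb 2 (R.side j)⌉, R, hR, fun j => rfl⟩
  obtain ⟨s, hs, hw⟩ := key_construction n (spectrumB B) hW S hS hdense k hk1 n le_rfl
  refine ⟨s, hs, ?_⟩
  intro m hm
  have hm1 : ∀ j, 1 ≤ m j := hm.1
  have hmk : ∀ j, m j ≤ k := by
    intro j
    calc m j ≤ ∑ i, m i :=
          Finset.single_le_sum (fun i _ => Nat.zero_le _) (Finset.mem_univ j)
      _ = k := hm.2
  obtain ⟨wf, hwfmem, hwf⟩ :=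
    hw fun j => (⟨m j - 1, by have := hm1 j; have := hmk j; omega⟩ : Fin k)
  obtain ⟨u, huW, hue⟩ := hwfmem
  have huwf : u = wf := hue
  obtain ⟨R, hRB, hRu⟩ := huW
  refine ⟨dyadicHull R, ⟨R, hRB, rfl⟩, ?_⟩
  intro j
  have hside : (dyadicHull R).side j = (2 : ℝ) ^ (u j) := by
    rw [hRu j]
    simp only [dyadicHull, BoxInterval.side]
    ring
  rw [hside, huwf]
  have h1 : s j (m j - 1) < wf j := (hwf j).1
  have h2 : wf j ≤ s j (m j - 1 + 1) := (hwf j).2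
  rw [show m j - 1 + 1 = m j from by have := hm1 j; omega] at h2
  exact ⟨zpow_lt_zpow_right₀ one_lt_two h1, zpow_le_zpow_right₀ one_le_two h2⟩

end
end

section
/- Let B₁ be a rare basis of two-dimensional intervals satisfying the (is)-property and let B₂ be a translation-invariant collection of one-dimensional intervals whose lengths form an infinite set of dyadic numbers. Then the product basis B₁×B₂ = {J₁×J₂ : J₁ ∈ B₁, J₂ ∈ B₂} in ℝ³ is Ω_{3,k}-complete for every k ≥ 3. -/
open MeasureTheory Set
open scoped ENNReal

noncomputable section

-- helper lemmas
lemma ceil_logb_two_zpow (t : ℤ) : ⌈Real.logb 2 ((2:ℝ) ^ t)⌉ = t := by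
  have h : Real.logb 2 ((2:ℝ) ^ t) = t := by
    rw [Real.logb, Real.log_zpow, mul_div_assoc, div_self (Real.log_pos one_lt_two).ne', mul_one]
  rw [h, Int.ceil_intCast]

lemma dyadicHull_side {n : ℕ} (R : BoxInterval n) (j : Fin n) :
    (dyadicHull R).side j = (2:ℝ) ^ ⌈Real.logb 2 (R.side j)⌉ := by
  simp only [dyadicHull, BoxInterval.side]
  ring

lemma toSet_eq_pi_endpoints {n : ℕ} (R : BoxInterval n) (a b : Fin n → ℝ)
    (hab : ∀ j, a j < b j)
    (h : R.toSet = Set.univ.pi fun j => Set.Icc (a j) (b j)) :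
    ∀ j, R.a j = a j ∧ R.b j = b j := by
  intro j
  have hne : (Set.univ.pi fun j => Set.Icc (R.a j) (R.b j)).Nonempty :=
    ⟨R.a, fun l _ => ⟨le_rfl, (R.hab l).le⟩⟩
  have h' : (Set.univ.pi fun j => Set.Icc (R.a j) (R.b j))
      = Set.univ.pi fun j => Set.Icc (a j) (b j) := h
  have hne2 : (Set.univ.pi fun j => Set.Icc (a j) (b j)).Nonempty := h' ▸ hne
  have h1 := Set.eval_image_univ_pi (i := j) hne
  have h2 := Set.eval_image_univ_pi (i := j) hne2
  rw [h'] at h1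
  have hIcc : Set.Icc (R.a j) (R.b j) = Set.Icc (a j) (b j) := by rw [← h1, h2]
  have hm1 : R.a j ∈ Set.Icc (a j) (b j) := hIcc ▸ Set.left_mem_Icc.mpr (R.hab j).le
  have hm2 : a j ∈ Set.Icc (R.a j) (R.b j) := hIcc ▸ Set.left_mem_Icc.mpr (hab j).le
  have hm3 : R.b j ∈ Set.Icc (a j) (b j) := hIcc ▸ Set.right_mem_Icc.mpr (R.hab j).le
  have hm4 : b j ∈ Set.Icc (R.a j) (R.b j) := hIcc ▸ Set.right_mem_Icc.mpr (hab j).le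
  exact ⟨le_antisymm hm2.1 hm1.1, le_antisymm hm3.2 hm4.2⟩


lemma prodBox_side_castSucc {n : ℕ} (J1 : BoxInterval n) (J2 : BoxInterval 1) (i : Fin n) :
    (prodBox J1 J2).side i.castSucc = J1.side i := by
  simp [prodBox, BoxInterval.side]

lemma prodBox_side_last {n : ℕ} (J1 : BoxInterval n) (J2 : BoxInterval 1) :
    (prodBox J1 J2).side (Fin.last n) = J2.side 0 := by
  simp [prodBox, BoxInterval.side]


/-- Application VII (completeness part): if `B₁` is a rare basis in `ℝ²` with the
(is)-property and `B₂` is a translation-invariant family of one-dimensional intervals whose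
lengths form an infinite set of dyadic numbers, then `B₁ × B₂` is `Ω_{3,k}`-complete for
every `k ≥ 3`. -/
theorem statement16 (B1 : Set (BoxInterval 2)) (hB1 : IsRareBasis B1)
    (his : ISProperty B1)
    (B2 : Set (BoxInterval 1))
    (hB2trans : ∀ I ∈ B2, ∀ v : Fin 1 → ℝ, I.translate v ∈ B2)
    (hB2inf : {l : ℝ | ∃ I ∈ B2, I.side 0 = l}.Infinite)
    (hB2dyadic : {l : ℝ | ∃ I ∈ B2, I.side 0 = l} ⊆ {x | ∃ s : ℤ, x = (2:ℝ) ^ s}) :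
    ∀ k : ℕ, 3 ≤ k → OmegaComplete (prodBasis B1 B2) k (OmegaNK 3 k) := by
  intro k hk
  obtain ⟨R, hRB, hRa, hRb, hinc, hint⟩ := his k
  choose PQ hPQ using hRb
  set P : Fin (k+1) → ℤ := fun i => PQ i 0 with hPdef
  set Qe : Fin (k+1) → ℤ := fun i => PQ i 1 with hQdef
  -- description of the sets of the R i
  have hRset : ∀ i : Fin (k+1),
      (R i).toSet = Set.univ.pi fun l => Set.Icc (0:ℝ) ((2:ℝ) ^ PQ i l) := by
    intro i
    unfold BoxInterval.toSet
    refine congrArg (Set.pi Set.univ) (funext fun l => ?_)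
    rw [hPQ i l, show (R i).a l = 0 from by rw [hRa i]]
  -- incomparability consequence
  have key : ∀ i j, i ≠ j → ¬ (P i ≤ P j ∧ Qe i ≤ Qe j) := by
    rintro i j hij ⟨h1, h2⟩
    apply hinc i j hij 0
    have htr : ((R i).translate 0).toSet = (R i).toSet := by
      unfold BoxInterval.toSet BoxInterval.translate
      simp
    rw [htr, hRset i, hRset j]
    intro x hx l hl
    have hx' := hx l (Set.mem_univ l)
    have hle : PQ i l ≤ PQ j l := by fin_cases l; exacts [h1, h2]
    exact ⟨hx'.1, hx'.2.trans (zpow_le_zpow_right₀ one_le_two hle)⟩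
  have hPinj : Function.Injective P := by
    intro i j h
    by_contra hne
    rcases le_total (Qe i) (Qe j) with hq | hq
    · exact key i j hne ⟨h.le, hq⟩
    · exact key j i (Ne.symm hne) ⟨h.ge, hq⟩
  have hanti : ∀ i j, i ≠ j → P i < P j → Qe j < Qe i := by
    intro i j hij hPij
    by_contra h
    push_neg at h
    exact key i j hij ⟨hPij.le, h⟩
  -- sort the exponents
  have hcard : (Finset.univ.image P).card = k + 1 := by
    rw [Finset.card_image_of_injective _ hPinj, Finset.card_univ, Fintype.card_fin]
  set e := Finset.orderIsoOfFin _ hcard with hedef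
  have hmem : ∀ i : Fin (k+1), ((e i : ℤ)) ∈ Finset.univ.image P := fun i => (e i).2
  have hex : ∀ i : Fin (k+1), ∃ i', P i' = (e i : ℤ) := by
    intro i
    obtain ⟨i', -, h⟩ := Finset.mem_image.mp (hmem i)
    exact ⟨i', h⟩
  choose idx hidx using hex
  set p : Fin (k+1) → ℤ := fun i => P (idx i) with hpdef
  set q : Fin (k+1) → ℤ := fun i => Qe (idx i) with hqdef
  have hpmono : StrictMono p := by
    intro i j hij
    rw [hpdef]
    simp only [hidx]
    exact Subtype.coe_lt_coe.mpr (e.strictMono hij)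
  have hidxne : ∀ i j : Fin (k+1), i ≠ j → idx i ≠ idx j := by
    intro i j hij h
    refine hij (e.injective (Subtype.coe_injective ?_))
    show (e i : ℤ) = (e j : ℤ)
    rw [← hidx i, ← hidx j, h]
  have hqanti : ∀ i j : Fin (k+1), i < j → q j < q i := by
    intro i j hij
    exact hanti (idx i) (idx j) (hidxne i j hij.ne) (hpmono hij)
  -- third coordinate: infinitely many dyadic exponents
  set L := {l : ℝ | ∃ I ∈ B2, I.side 0 = l} with hLdef
  set E := {s : ℤ | (2:ℝ) ^ s ∈ L} with hEdef
  have hEinf : E.Infinite := by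
    intro hfin
    apply hB2inf
    have hsub : L ⊆ (fun s : ℤ => (2:ℝ) ^ s) '' E := by
      intro l hl
      obtain ⟨s, hs⟩ := hB2dyadic hl
      exact ⟨s, by rw [hEdef]; exact Set.mem_setOf.mpr (hs ▸ hl), hs.symm⟩
    exact (hfin.image _).subset hsub
  obtain ⟨T, hTE, hTcard⟩ := hEinf.exists_subset_card_eq (k+1)
  set r : Fin (k+1) → ℤ := fun i => T.orderEmbOfFin hTcard i with hrdef
  have hrmono : StrictMono r := (T.orderEmbOfFin hTcard).strictMono
  have hrE : ∀ i, r i ∈ E := fun i => hTE (T.orderEmbOfFin_mem hTcard i)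
  -- the sequences
  set s1 : ℕ → ℤ := fun m => p ⟨min m k, by omega⟩ with hs1def
  set s2 : ℕ → ℤ := fun m => q ⟨k - min m k, by omega⟩ with hs2def
  set s3 : ℕ → ℤ := fun m => r ⟨min m k, by omega⟩ with hs3def
  refine ⟨![s1, s2, s3], ?_, ?_⟩
  · intro j m hm
    fin_cases j
    · simp only [Matrix.cons_val_zero, hs1def]
      exact hpmono (by simp [Fin.lt_def]; omega)
    · simp only [Matrix.cons_val_one, Matrix.head_cons, hs2def]
      exact hqanti _ _ (by simp [Fin.lt_def]; omega)
    · simp only [hs3def]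
      exact hrmono (by simp [Fin.lt_def]; omega)
  · rintro m ⟨hm1, hmsum⟩
    have hmjk : ∀ j : Fin 3, m j ≤ k := by
      intro j
      calc m j ≤ ∑ i, m i := Finset.single_le_sum (fun i _ => Nat.zero_le (m i)) (Finset.mem_univ j)
      _ = k := hmsum
    rw [Fin.sum_univ_three] at hmsum
    have hm0 := hm1 0
    have hm1' := hm1 1
    have hm2 := hm1 2
    -- indices
    set i0 : Fin (k+1) := ⟨m 0, by omega⟩ with hi0def
    set j0 : Fin (k+1) := ⟨k - m 1, by omega⟩ with hj0def
    have hij0 : i0 < j0 := by simp [hi0def, hj0def, Fin.lt_def]; omega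
    obtain ⟨Qb, hQbB, hQbset⟩ := hint (idx i0) (idx j0)
    -- intersection computation
    have hintset : (R (idx i0)).toSet ∩ (R (idx j0)).toSet
        = Set.univ.pi fun l => Set.Icc (0:ℝ)
            ((2:ℝ) ^ min (PQ (idx i0) l) (PQ (idx j0) l)) := by
      rw [hRset, hRset, ← Set.pi_inter_distrib]
      refine congrArg (Set.pi Set.univ) (funext fun l => ?_)
      rw [Set.Icc_inter_Icc, max_self]
      exact congrArg (Set.Icc 0) ((zpow_right_mono₀ (G₀ := ℝ) one_le_two).map_min).symm
    have hQbside := toSet_eq_pi_endpoints Qb _ _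
      (fun l => by positivity) (hQbset.trans hintset)
    have hQside : ∀ l, Qb.side l = (2:ℝ) ^ min (PQ (idx i0) l) (PQ (idx j0) l) := by
      intro l
      unfold BoxInterval.side
      rw [(hQbside l).1, (hQbside l).2]
      ring
    -- identify the mins
    have hQside0 : Qb.side 0 = (2:ℝ) ^ p i0 := by
      rw [hQside 0]
      congr 1
      exact min_eq_left (hpmono hij0).le
    have hQside1 : Qb.side 1 = (2:ℝ) ^ q j0 := by
      rw [hQside 1]
      congr 1
      exact min_eq_right (hqanti i0 j0 hij0).le
    -- the 1-d interval
    obtain ⟨I, hI, hIside⟩ := hrE ⟨m 2, by omega⟩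
    refine ⟨dyadicHull (prodBox Qb I), ⟨prodBox Qb I, ⟨Qb, hQbB, I, hI, rfl⟩, rfl⟩, ?_⟩
    -- side lengths of the hull
    have hside : ∀ (j : Fin 3) (t : ℤ), (prodBox Qb I).side j = (2:ℝ) ^ t →
        (dyadicHull (prodBox Qb I)).side j = (2:ℝ) ^ t := by
      intro j t ht
      rw [dyadicHull_side, ht, ceil_logb_two_zpow]
    have hstep : ∀ (j : Fin 3) (mm : ℕ), mm < k →
        (![s1,s2,s3] : Fin 3 → ℕ → ℤ) j mm < (![s1,s2,s3] : Fin 3 → ℕ → ℤ) j (mm+1) := by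
      intro j mm hmm
      fin_cases j
      · exact hpmono (by simp [Fin.lt_def]; omega)
      · exact hqanti _ _ (by simp [Fin.lt_def]; omega)
      · exact hrmono (by simp [Fin.lt_def]; omega)
    intro j
    have hlt : (![s1,s2,s3] : Fin 3 → ℕ → ℤ) j (m j - 1) < (![s1,s2,s3] : Fin 3 → ℕ → ℤ) j (m j) := by
      have h1 := hm1 j
      have h2 := hmjk j
      have := hstep j (m j - 1) (by omega)
      have hmj1 : m j - 1 + 1 = m j := by omega
      rwa [hmj1] at this
    have hm0k := hmjk 0
    have hm1k := hmjk 1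
    have hm2k := hmjk 2
    have hs1m : s1 (m 0) = p i0 := by
      rw [hs1def]
      exact congrArg p (Fin.ext (by simp [hi0def]; omega))
    have hs2m : s2 (m 1) = q j0 := by
      rw [hs2def]
      exact congrArg q (Fin.ext (by simp [hj0def]; omega))
    have hs3m : s3 (m 2) = r ⟨m 2, by omega⟩ := by
      rw [hs3def]
      exact congrArg r (Fin.ext (by simp; omega))
    have h0 : (dyadicHull (prodBox Qb I)).side 0 = (2:ℝ) ^ s1 (m 0) := by
      apply hside
      rw [hs1m, ← hQside0]
      exact prodBox_side_castSucc Qb I 0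
    have h1 : (dyadicHull (prodBox Qb I)).side 1 = (2:ℝ) ^ s2 (m 1) := by
      apply hside
      rw [hs2m, ← hQside1]
      exact prodBox_side_castSucc Qb I 1
    have h2 : (dyadicHull (prodBox Qb I)).side 2 = (2:ℝ) ^ s3 (m 2) := by
      apply hside
      rw [hs3m, ← hIside]
      exact prodBox_side_last Qb I
    have hval : (dyadicHull (prodBox Qb I)).side j
        = (2:ℝ) ^ ((![s1,s2,s3] : Fin 3 → ℕ → ℤ) j (m j)) := by
      fin_cases j
      · exact h0
      · exact h1
      · exact h2
    rw [hval]
    exact ⟨zpow_lt_zpow_right₀ one_lt_two hlt, le_rfl⟩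

end
end
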